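/- For every p ∈ ZZ × ℤ and every integer δ ≥ 0, the counterpart in ℤ² of the worm ⊞²_δ(p) is an interval of ℤ², i.e., a connected convex subposet of ℤ² with the componentwise order. -/

import Mathlib

open CategoryTheory CategoryTheory.Limits
open scoped ENNReal

noncomputable section

/-- A subposet `S` is connected if any two of its points are joined by a zigzag of
comparabilities inside `S`. -/
def PosetConn {α : Type*} [Preorder α] (S : Set α) : Prop :=
  ∀ p ∈ S, ∀ q ∈ S,
    Relation.ReflTransGen (fun a b => a ∈ S ∧ b ∈ S ∧ (a ≤ b ∨ b ≤ a)) p q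

/-- An interval of a poset: a connected convex subposet. -/
def IsIntervalIn {α : Type*} [Preorder α] (S : Set α) : Prop :=
  PosetConn S ∧ S.OrdConnected

/-- The zigzag poset `ZZ`, the subposet of `ℤᵒᵖ × ℤ` of points `(i,j)` with `j ∈ {i, i-1}`. -/
def ZZSet : Set (ℤᵒᵈ × ℤ) :=
  {p | p.2 = OrderDual.ofDual p.1 ∨ p.2 = OrderDual.ofDual p.1 - 1}

/-- The quasi zigzag poset `ZZ × ℤ` with the product order. -/
def QZ : Type := ↥ZZSet × ℤ

instance : PartialOrder QZ := inferInstanceAs (PartialOrder (↥ZZSet × ℤ))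

/-- the `ZZ`-component of a point of the quasi zigzag poset -/
def QZ.zz (p : QZ) : ↥ZZSet := (show ↥ZZSet × ℤ from p).1

/-- the `ℤ`-component of a point of the quasi zigzag poset -/
def QZ.t (p : QZ) : ℤ := (show ↥ZZSet × ℤ from p).2

/-- The identification of `ZZ × ℤ` with `ℤ²` as sets: consecutive elements of `ZZ`
are indexed by consecutive x-coordinates. -/
def toZ2 (p : QZ) : ℤ × ℤ := (OrderDual.ofDual p.zz.val.1 + p.zz.val.2, p.t)

/-- the `∞`-distance on `ℤ²` -/
def dInf (a b : ℤ × ℤ) : ℤ := max |a.1 - b.1| |a.2 - b.2|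

/-- the `δ`-square of points of `ZZ × ℤ` centered at the `ℤ²`-point `c` -/
def sqAt (c : ℤ × ℤ) (δ : ℤ) : Set QZ := {z | dInf c (toZ2 z) ≤ δ}

/-- The worm centered at `p` with width `δ`: the union of the `δ`-square at `p` with the
`δ`-squares centered at `p ± (δ, -δ)`. -/
def worm (p : QZ) (δ : ℤ) : Set QZ :=
  sqAt (toZ2 p) δ ∪ sqAt (toZ2 p + (δ, -δ)) δ ∪ sqAt (toZ2 p - (δ, -δ)) δ

lemma center_mem_worm (p : QZ) {δ : ℤ} (hδ : 0 ≤ δ) : p ∈ worm p δ :=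
  Or.inl (Or.inl (by simp [sqAt, dInf, hδ]))


lemma toZ2_surj : Function.Surjective toZ2 := by
  rintro ⟨x, y⟩
  rcases Int.even_or_odd x with ⟨k, hk⟩ | ⟨k, hk⟩
  · refine ⟨⟨⟨(OrderDual.toDual k, k), Or.inl rfl⟩, y⟩, ?_⟩
    simp only [toZ2, QZ.zz, QZ.t]
    simp [Prod.ext_iff]; omega
  · refine ⟨⟨⟨(OrderDual.toDual (k+1), k), Or.inr (by simp)⟩, y⟩, ?_⟩
    simp only [toZ2, QZ.zz, QZ.t]
    simp [Prod.ext_iff]; omega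

/-- the worm as a subset of ℤ² -/
def wormZ2 (c : ℤ × ℤ) (δ : ℤ) : Set (ℤ × ℤ) :=
  {q | dInf c q ≤ δ ∨ dInf (c + (δ, -δ)) q ≤ δ ∨ dInf (c - (δ, -δ)) q ≤ δ}

lemma image_worm (p : QZ) (δ : ℤ) : toZ2 '' worm p δ = wormZ2 (toZ2 p) δ := by
  ext q
  constructor
  · rintro ⟨z, hz, rfl⟩
    simpa [wormZ2, worm, sqAt, or_assoc] using hz
  · intro hq
    obtain ⟨z, rfl⟩ := toZ2_surj q
    refine ⟨z, ?_, rfl⟩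
    simpa [wormZ2, worm, sqAt, or_assoc] using hq

/-- within one square, any two points are zigzag-connected inside any superset `S` -/
lemma sq_conn {S : Set (ℤ × ℤ)} {e : ℤ × ℤ} {δ : ℤ}
    (hsub : ∀ q : ℤ × ℤ, dInf e q ≤ δ → q ∈ S)
    {x y : ℤ × ℤ} (hx : dInf e x ≤ δ) (hy : dInf e y ≤ δ) :
    Relation.ReflTransGen (fun a b => a ∈ S ∧ b ∈ S ∧ (a ≤ b ∨ b ≤ a)) x y := by
  set m : ℤ × ℤ := (min x.1 y.1, min x.2 y.2) with hm
  have hmd : dInf e m ≤ δ := by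
    simp only [dInf, max_le_iff, abs_le, hm] at hx hy ⊢
    omega
  have h1 : m ≤ x := ⟨min_le_left _ _, min_le_left _ _⟩
  have h2 : m ≤ y := ⟨min_le_right _ _, min_le_right _ _⟩
  exact Relation.ReflTransGen.trans
    (Relation.ReflTransGen.single ⟨hsub _ hx, hsub _ hmd, Or.inr h1⟩)
    (Relation.ReflTransGen.single ⟨hsub _ hmd, hsub _ hy, Or.inl h2⟩)

lemma wormZ2_interval (c : ℤ × ℤ) (δ : ℤ) (hδ : 0 ≤ δ) :
    IsIntervalIn (wormZ2 c δ) := by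
  constructor
  · -- connectivity: join everything to the center c
    have hc : ∀ q ∈ wormZ2 c δ,
        Relation.ReflTransGen
          (fun a b => a ∈ wormZ2 c δ ∧ b ∈ wormZ2 c δ ∧ (a ≤ b ∨ b ≤ a)) q c := by
      intro q hq
      have hmid : ∀ r : ℤ × ℤ, dInf c r ≤ δ → r ∈ wormZ2 c δ := fun r hr => Or.inl hr
      have hcc : dInf c c ≤ δ := by simp [dInf]; omega
      rcases hq with h | h | h
      · exact sq_conn hmid h hcc
      · have hsub : ∀ r : ℤ × ℤ, dInf (c + (δ, -δ)) r ≤ δ → r ∈ wormZ2 c δ :=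
          fun r hr => Or.inr (Or.inl hr)
        have heS : dInf (c + (δ, -δ)) c ≤ δ := by
          simp only [dInf, max_le_iff, abs_le, Prod.fst_add, Prod.snd_add]
          omega
        exact sq_conn hsub h heS
      · have hsub : ∀ r : ℤ × ℤ, dInf (c - (δ, -δ)) r ≤ δ → r ∈ wormZ2 c δ :=
          fun r hr => Or.inr (Or.inr hr)
        have heS : dInf (c - (δ, -δ)) c ≤ δ := by
          simp only [dInf, max_le_iff, abs_le, Prod.fst_sub, Prod.snd_sub]
          omega
        exact sq_conn hsub h heS
    intro q hq q' hq'
    have hsymm : Symmetric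
        (fun a b : ℤ × ℤ => a ∈ wormZ2 c δ ∧ b ∈ wormZ2 c δ ∧ (a ≤ b ∨ b ≤ a)) :=
      fun a b ⟨ha, hb, hab⟩ => ⟨hb, ha, hab.symm⟩
    exact (hc q hq).trans ((@Relation.ReflTransGen.stdSymm _ _ ⟨hsymm⟩).symm _ _ (hc q' hq'))
  · -- convexity
    constructor
    intro x hx y hy z hz
    obtain ⟨hxz, hzy⟩ := hz
    simp only [Prod.le_def] at hxz hzy
    simp only [wormZ2, Set.mem_setOf_eq, dInf, max_le_iff, abs_le,
      Prod.fst_add, Prod.snd_add, Prod.fst_sub, Prod.snd_sub] at hx hy ⊢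
    omega

/-- For every `p ∈ ZZ × ℤ` and every integer `δ ≥ 0`, the counterpart in
`ℤ²` of the worm `⊞²_δ(p)` is an interval of `ℤ²` with the componentwise order. -/
theorem statement_2 (p : QZ) (δ : ℤ) (hδ : 0 ≤ δ) :
    IsIntervalIn (toZ2 '' worm p δ) := by
  rw [image_worm]
  exact wormZ2_interval (toZ2 p) δ hδ

end
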